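/- Let a be a standard Gaussian random vector in R^N (a ∼ N(0, I_N)) and let x, y be unit vectors. Then √(π/2) · E[sign(⟨a, x⟩) · ⟨a, y⟩] = ⟨x, y⟩, where sign(t) = 1 if t > 0 and −1 otherwise. -/

import Mathlib

open MeasureTheory ProbabilityTheory RealInnerProductSpace

/-- The standard Gaussian measure `N(0, I_N)` on `ℝ^N`. -/
noncomputable def stdGaussian (N : ℕ) : Measure (EuclideanSpace ℝ (Fin N)) :=
  (Measure.pi fun _ : Fin N => gaussianReal 0 1).map
    (MeasurableEquiv.toLp 2 (Fin N → ℝ))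

/-- `sign(t) = 1` if `t > 0` and `-1` otherwise. -/
noncomputable def sgn (t : ℝ) : ℝ := if 0 < t then 1 else -1

open Real Set Filter


lemma lintegral_pi_prod {n : ℕ} (μ : Measure ℝ) [SigmaFinite μ] (f : Fin n → ℝ → ENNReal)
    (hf : ∀ i, Measurable (f i)) :
    ∫⁻ v : Fin n → ℝ, ∏ i, f i (v i) ∂(Measure.pi fun _ => μ) = ∏ i, ∫⁻ t, f i t ∂μ := by
  induction n with
  | zero =>
      simp [Measure.pi_of_empty (fun _ : Fin 0 => μ)]
  | succ n ih =>
      have h := measurePreserving_piFinSuccAbove (fun _ : Fin (n + 1) => μ) 0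
      set e := MeasurableEquiv.piFinSuccAbove (fun _ : Fin (n + 1) => ℝ) 0 with he
      calc ∫⁻ v : Fin (n + 1) → ℝ, ∏ i, f i (v i) ∂(Measure.pi fun _ => μ)
          = ∫⁻ p : ℝ × (Fin n → ℝ), ∏ i, f i (e.symm p i) ∂(μ.prod (Measure.pi fun _ => μ)) := by
            rw [← h.map_eq, lintegral_map_equiv]
            simp
        _ = ∫⁻ p : ℝ × (Fin n → ℝ), f 0 p.1 * ∏ i : Fin n, f i.succ (p.2 i)
              ∂(μ.prod (Measure.pi fun _ => μ)) := by
            congr 1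
            ext p
            simp_rw [he, MeasurableEquiv.piFinSuccAbove_symm_apply, Fin.insertNthEquiv,
              Fin.prod_univ_succ, Fin.insertNth_zero, Equiv.coe_fn_mk, Fin.cons_zero, Fin.cons_succ,
              cast_eq]
        _ = (∫⁻ t, f 0 t ∂μ) * ∏ i : Fin n, ∫⁻ t, f i.succ t ∂μ := by
            have hg : Measurable fun v : Fin n → ℝ => ∏ i : Fin n, f i.succ (v i) :=
              Finset.measurable_prod _ fun i _ => (hf i.succ).comp (measurable_pi_apply i)
            have h2 := lintegral_prod_mul (μ := μ) (ν := Measure.pi fun _ : Fin n => μ)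
              (f := fun t => f 0 t) (g := fun v => ∏ i : Fin n, f i.succ (v i))
              (hf 0).aemeasurable hg.aemeasurable
            exact h2.trans (by rw [ih _ fun i => hf i.succ])
        _ = ∏ i, ∫⁻ t, f i t ∂μ := by rw [Fin.prod_univ_succ]

lemma pi_gaussian_eq (N : ℕ) :
    (Measure.pi fun _ : Fin N => gaussianReal 0 1)
      = (volume : Measure (Fin N → ℝ)).withDensity fun w => ∏ i, gaussianPDF 0 1 (w i) := by
  refine Measure.pi_eq fun s hs => ?_
  rw [withDensity_apply _ (MeasurableSet.univ_pi hs), ← lintegral_indicator (MeasurableSet.univ_pi hs)]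
  have : ∀ w : Fin N → ℝ, (Set.univ.pi s).indicator (fun w => ∏ i, gaussianPDF 0 1 (w i)) w
      = ∏ i, (s i).indicator (gaussianPDF 0 1) (w i) := by
    intro w
    by_cases hw : w ∈ Set.univ.pi s
    · rw [Set.indicator_of_mem hw]
      exact Finset.prod_congr rfl fun i _ =>
        (Set.indicator_of_mem (hw i (Set.mem_univ i)) _).symm
    · rw [Set.indicator_of_notMem hw]
      rw [Set.mem_univ_pi] at hw
      push_neg at hw
      obtain ⟨i, hi⟩ := hw
      exact (Finset.prod_eq_zero (Finset.mem_univ i)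
        (by rw [Set.indicator_of_notMem hi])).symm
  simp_rw [this]
  rw [volume_pi, lintegral_pi_prod _ _ (fun i => (measurable_gaussianPDF 0 1).indicator (hs i))]
  refine Finset.prod_congr rfl fun i _ => ?_
  rw [lintegral_indicator (hs i), ← gaussianReal_apply 0 one_ne_zero]

lemma map_withDensity_equiv [MeasurableSpace α] [MeasurableSpace β] (μ : Measure α)
    (e : α ≃ᵐ β) (f : α → ENNReal) (hf : Measurable f) :
    (μ.withDensity f).map e = (μ.map e).withDensity (f ∘ e.symm) := by
  ext s hs
  rw [Measure.map_apply e.measurable hs, withDensity_apply _ (e.measurable hs),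
    withDensity_apply _ hs,
    setLIntegral_map hs (hf.comp e.symm.measurable) e.measurable]
  refine setLIntegral_congr_fun (e.measurable hs) (fun x _ => ?_)
  simp

lemma gaussianPDFReal_std (x : ℝ) :
    gaussianPDFReal 0 1 x = (Real.sqrt (2 * π))⁻¹ * Real.exp (-x ^ 2 / 2) := by
  simp [gaussianPDFReal]

noncomputable def stdD (N : ℕ) : EuclideanSpace ℝ (Fin N) → ENNReal :=
  fun a => ENNReal.ofReal ((Real.sqrt (2 * π))⁻¹ ^ N * Real.exp (-‖a‖ ^ 2 / 2))

lemma prod_gaussianPDF_eq {N : ℕ} (a : EuclideanSpace ℝ (Fin N)) :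
    (∏ i, gaussianPDF 0 1 (a i)) = stdD N a := by
  rw [stdD, gaussianPDF_def]
  rw [← ENNReal.ofReal_prod_of_nonneg (fun i _ => gaussianPDFReal_nonneg 0 1 (a i))]
  congr 1
  simp_rw [gaussianPDFReal_std]
  rw [Finset.prod_mul_distrib, Finset.prod_const, ← Real.exp_sum, Finset.card_univ,
    Fintype.card_fin]
  congr 1
  congr 1
  rw [EuclideanSpace.norm_eq, Real.sq_sqrt (by positivity)]
  simp_rw [Real.norm_eq_abs, sq_abs, neg_div, Finset.sum_neg_distrib, Finset.sum_div]

lemma stdGaussian_eq_withDensity (N : ℕ) :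
    stdGaussian N = (volume : Measure (EuclideanSpace ℝ (Fin N))).withDensity (stdD N) := by
  have hmeas : Measurable fun w : Fin N → ℝ => ∏ i, gaussianPDF 0 1 (w i) :=
    Finset.measurable_prod _ fun i _ => (measurable_gaussianPDF 0 1).comp (measurable_pi_apply i)
  rw [_root_.stdGaussian, pi_gaussian_eq,
    map_withDensity_equiv _ (MeasurableEquiv.toLp 2 (Fin N → ℝ)) _ hmeas,
    (show Measure.map (MeasurableEquiv.toLp 2 (Fin N → ℝ)) volume = volume from
      ((EuclideanSpace.volume_preserving_symm_measurableEquiv_toLp (Fin N)).symm _).map_eq)]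
  congr 1
  funext a
  rw [← prod_gaussianPDF_eq a]
  rfl

lemma stdGaussian_map_isometry {N : ℕ}
    (L : EuclideanSpace ℝ (Fin N) ≃ₗᵢ[ℝ] EuclideanSpace ℝ (Fin N)) :
    (stdGaussian N).map L = stdGaussian N := by
  have hD : Measurable (stdD N) := by
    apply Measurable.ennreal_ofReal
    exact measurable_const.mul ((measurable_norm.pow_const 2).neg.div_const 2).exp
  have hcomp : stdD N ∘ ⇑(L.toHomeomorph.toMeasurableEquiv).symm = stdD N := by
    funext a
    simp only [Function.comp_apply, stdD]
    have : ‖L.toHomeomorph.toMeasurableEquiv.symm a‖ = ‖a‖ := L.symm.norm_map a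
    rw [this]
  rw [stdGaussian_eq_withDensity,
    show (⇑L : EuclideanSpace ℝ (Fin N) → EuclideanSpace ℝ (Fin N))
      = ⇑(L.toHomeomorph.toMeasurableEquiv) from rfl,
    map_withDensity_equiv _ (L.toHomeomorph.toMeasurableEquiv) _ hD,
    show (Measure.map (⇑(L.toHomeomorph.toMeasurableEquiv)) volume) = volume from
      L.measurePreserving.map_eq,
    hcomp, ← stdGaussian_eq_withDensity]

lemma pi_map_eval {n : ℕ} (μ : Measure ℝ) [IsProbabilityMeasure μ] (i : Fin n) :
    (Measure.pi fun _ : Fin n => μ).map (fun v => v i) = μ := by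
  ext s hs
  rw [Measure.map_apply (measurable_pi_apply i) hs]
  have : (fun v : Fin n → ℝ => v i) ⁻¹' s
      = Set.pi Set.univ (Function.update (fun _ => Set.univ) i s) := by
    rw [← Set.eval_preimage]
  rw [this, Measure.pi_pi]
  rw [Finset.prod_eq_single i
    (fun j _ hj => by rw [Function.update_of_ne hj]; exact measure_univ)
    (fun h => absurd (Finset.mem_univ i) h)]
  rw [Function.update_self]

-- coordinate measurability on EuclideanSpace

lemma measurable_coord {N : ℕ} (i : Fin N) :
    Measurable fun a : EuclideanSpace ℝ (Fin N) => a i :=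
  (measurable_pi_apply i).comp (MeasurableEquiv.toLp 2 (Fin N → ℝ)).symm.measurable

lemma stdGaussian_map_coord {N : ℕ} (i : Fin N) :
    (stdGaussian N).map (fun a => a i) = gaussianReal 0 1 := by
  rw [_root_.stdGaussian, Measure.map_map (measurable_coord i)
    (MeasurableEquiv.toLp 2 (Fin N → ℝ)).measurable]
  have : ((fun a : EuclideanSpace ℝ (Fin N) => a i)
      ∘ ⇑(MeasurableEquiv.toLp 2 (Fin N → ℝ))) = fun v : Fin N → ℝ => v i := rfl
  rw [this, pi_map_eval]

lemma exists_basis_extend {N : ℕ} {x : EuclideanSpace ℝ (Fin N)} (hx : ‖x‖ = 1) (i0 : Fin N) :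
    ∃ b : OrthonormalBasis (Fin N) ℝ (EuclideanSpace ℝ (Fin N)), b i0 = x := by
  have hcard : Module.finrank ℝ (EuclideanSpace ℝ (Fin N)) = Fintype.card (Fin N) := by
    rw [finrank_euclideanSpace_fin, Fintype.card_fin]
  have horth : Orthonormal ℝ (Set.restrict {i0} (fun _ => x)) := by
    constructor
    · intro i
      exact hx
    · intro i j hij
      exact absurd (Subtype.ext ((i.2 : i.1 ∈ ({i0} : Set (Fin N))).trans
        ((j.2 : j.1 ∈ ({i0} : Set (Fin N)))).symm)) hij
  obtain ⟨b, hb⟩ := horth.exists_orthonormalBasis_extension_of_card_eq hcard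
  exact ⟨b, hb i0 rfl⟩

lemma inner_repr_symm {N : ℕ} (b : OrthonormalBasis (Fin N) ℝ (EuclideanSpace ℝ (Fin N)))
    (w : EuclideanSpace ℝ (Fin N)) (i : Fin N) :
    ⟪b.repr.symm w, b i⟫ = w i := by
  rw [real_inner_comm, ← b.repr_apply_apply, LinearIsometryEquiv.apply_symm_apply]

lemma stdGaussian_map_inner {N : ℕ} (x : EuclideanSpace ℝ (Fin N)) (hx : ‖x‖ = 1) :
    (stdGaussian N).map (fun a => ⟪a, x⟫) = gaussianReal 0 1 := by
  have hN : N ≠ 0 := by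
    intro h
    subst h
    have : x = 0 := by ext i; exact i.elim0
    rw [this, norm_zero] at hx
    norm_num at hx
  obtain ⟨b, hb⟩ := exists_basis_extend hx ⟨0, Nat.pos_of_ne_zero hN⟩
  set i0 : Fin N := ⟨0, Nat.pos_of_ne_zero hN⟩
  have hinner : Continuous fun a : EuclideanSpace ℝ (Fin N) => ⟪a, x⟫ :=
    continuous_id.inner continuous_const
  calc (stdGaussian N).map (fun a => ⟪a, x⟫)
      = ((stdGaussian N).map (b.repr.symm : EuclideanSpace ℝ (Fin N) ≃ₗᵢ[ℝ]
          EuclideanSpace ℝ (Fin N))).map (fun a => ⟪a, x⟫) := by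
        rw [stdGaussian_map_isometry]
    _ = (stdGaussian N).map ((fun a => ⟪a, x⟫) ∘ ⇑(b.repr.symm)) := by
        rw [Measure.map_map hinner.measurable]
        exact (b.repr.symm : EuclideanSpace ℝ (Fin N) ≃ₗᵢ[ℝ]
          EuclideanSpace ℝ (Fin N)).continuous.measurable
    _ = (stdGaussian N).map (fun w => w i0) := by
        congr 1
        funext w
        simp only [Function.comp_apply]
        rw [← hb, inner_repr_symm]
    _ = gaussianReal 0 1 := stdGaussian_map_coord i0

lemma hasDerivAt_negexp (x : ℝ) :
    HasDerivAt (fun t : ℝ => -Real.exp (-t ^ 2 / 2)) (x * Real.exp (-x ^ 2 / 2)) x := by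
  have h1 : HasDerivAt (fun t : ℝ => -t ^ 2 / 2) (-x) x := by
    have := ((hasDerivAt_pow 2 x).neg).div_const 2
    refine this.congr_deriv ?_
    push_cast
    ring
  have h2 := (h1.exp).neg
  refine h2.congr_deriv ?_
  ring

lemma integrable_mul_exp : Integrable (fun x : ℝ => x * Real.exp (-x ^ 2 / 2)) := by
  have := integrable_mul_exp_neg_mul_sq (b := 1/2) (by norm_num)
  refine this.congr ?_
  refine ae_of_all _ fun x => ?_
  congr 1
  ring_nf

lemma integral_Ioi_mul_exp : ∫ x in Ioi (0:ℝ), x * Real.exp (-x ^ 2 / 2) = 1 := by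
  have h := integral_Ioi_of_hasDerivAt_of_tendsto
    (f := fun t : ℝ => -Real.exp (-t ^ 2 / 2)) (f' := fun x => x * Real.exp (-x ^ 2 / 2))
    (a := 0) (m := 0)
    (Continuous.continuousWithinAt (by continuity))
    (fun x _ => hasDerivAt_negexp x)
    integrable_mul_exp.integrableOn
    ?_
  · rw [h]; norm_num
  · have h1 : Tendsto (fun t : ℝ => -t ^ 2 / 2) atTop atBot := by
      apply Filter.Tendsto.atBot_div_const (by norm_num : (0:ℝ) < 2)
      exact tendsto_neg_atTop_atBot.comp (tendsto_pow_atTop two_ne_zero)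
    simpa using (Real.tendsto_exp_atBot.comp h1).neg

lemma integral_abs_exp : ∫ x : ℝ, |x| * Real.exp (-x ^ 2 / 2) = 2 := by
  have : ∀ x : ℝ, |x| * Real.exp (-x ^ 2 / 2)
      = (fun u => u * Real.exp (-u ^ 2 / 2)) |x| := by
    intro x
    simp only []
    rw [sq_abs]
  calc ∫ x : ℝ, |x| * Real.exp (-x ^ 2 / 2)
      = ∫ x : ℝ, (fun u => u * Real.exp (-u ^ 2 / 2)) |x| := by
        congr 1; funext x; exact this x
    _ = 2 * ∫ x in Ioi (0:ℝ), x * Real.exp (-x ^ 2 / 2) := integral_comp_abs (f := fun u => u * Real.exp (-u ^ 2 / 2))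
    _ = 2 := by rw [integral_Ioi_mul_exp]; norm_num

lemma gaussianReal_eq_withDensity :
    gaussianReal 0 1 = volume.withDensity fun x => ((gaussianPDFReal 0 1 x).toNNReal : ENNReal) := by
  rw [gaussianReal_of_var_ne_zero 0 one_ne_zero]
  rfl

lemma meas_pdfn : Measurable fun x => (gaussianPDFReal 0 1 x).toNNReal :=
  (measurable_gaussianPDFReal 0 1).real_toNNReal

lemma smul_pdfn (x : ℝ) (r : ℝ) : (gaussianPDFReal 0 1 x).toNNReal • r = gaussianPDFReal 0 1 x * r := by
  rw [NNReal.smul_def, Real.coe_toNNReal _ (gaussianPDFReal_nonneg 0 1 x), smul_eq_mul]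

lemma integrable_abs_gauss : Integrable (fun t => |t|) (gaussianReal 0 1) := by
  rw [gaussianReal_eq_withDensity,
    integrable_withDensity_iff_integrable_smul meas_pdfn]
  have : (fun x : ℝ => (gaussianPDFReal 0 1 x).toNNReal • |x|)
      = fun x : ℝ => (Real.sqrt (2 * π))⁻¹ * (|x * Real.exp (-x ^ 2 / 2)|) := by
    funext x
    rw [smul_pdfn, gaussianPDFReal_std, abs_mul, abs_of_nonneg (Real.exp_nonneg _)]
    ring
  rw [this]
  exact (integrable_mul_exp.abs.const_mul _)

lemma integral_abs_gauss : ∫ t, |t| ∂(gaussianReal 0 1) = (Real.sqrt (2 * π))⁻¹ * 2 := by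
  rw [gaussianReal_eq_withDensity,
    integral_withDensity_eq_integral_smul meas_pdfn]
  have : (fun x : ℝ => (gaussianPDFReal 0 1 x).toNNReal • |x|)
      = fun x : ℝ => (Real.sqrt (2 * π))⁻¹ * (|x| * Real.exp (-x ^ 2 / 2)) := by
    funext x
    rw [smul_pdfn, gaussianPDFReal_std]
    ring
  rw [this, integral_const_mul, integral_abs_exp]

lemma sgn_mul_self (t : ℝ) : sgn t * t = |t| := by
  rw [sgn]; split_ifs with h
  · rw [one_mul, abs_of_pos h]
  · rw [neg_one_mul, abs_of_nonpos (le_of_not_gt h)]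

lemma abs_sgn (t : ℝ) : |sgn t| = 1 := by
  rw [sgn]; split_ifs <;> simp

lemma measurable_sgn : Measurable sgn := by
  have : sgn = (Set.Ioi (0:ℝ)).piecewise (fun _ => (1:ℝ)) fun _ => -1 := by
    funext t
    simp [sgn, Set.piecewise, Set.mem_Ioi]
  rw [this]
  exact Measurable.piecewise measurableSet_Ioi measurable_const measurable_const

lemma continuous_inner_right {N : ℕ} (x : EuclideanSpace ℝ (Fin N)) :
    Continuous fun a : EuclideanSpace ℝ (Fin N) => ⟪a, x⟫ :=
  continuous_id.inner continuous_const

lemma integral_comp_isometry {N : ℕ}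
    (L : EuclideanSpace ℝ (Fin N) ≃ₗᵢ[ℝ] EuclideanSpace ℝ (Fin N))
    (f : EuclideanSpace ℝ (Fin N) → ℝ) :
    ∫ a, f (L a) ∂(stdGaussian N) = ∫ a, f a ∂(stdGaussian N) := by
  conv_rhs => rw [← stdGaussian_map_isometry L]
  rw [show (⇑L : EuclideanSpace ℝ (Fin N) → EuclideanSpace ℝ (Fin N))
    = ⇑(L.toHomeomorph.toMeasurableEquiv) from rfl, integral_map_equiv]

lemma integral_sgn_mul_inner_self {N : ℕ} (x : EuclideanSpace ℝ (Fin N)) (hx : ‖x‖ = 1) :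
    ∫ a, sgn ⟪a, x⟫ * ⟪a, x⟫ ∂(stdGaussian N) = (Real.sqrt (2 * π))⁻¹ * 2 := by
  have hφ : AEMeasurable (fun a : EuclideanSpace ℝ (Fin N) => ⟪a, x⟫) (stdGaussian N) :=
    (continuous_inner_right x).measurable.aemeasurable
  have hf : AEStronglyMeasurable (fun t : ℝ => sgn t * t)
      ((stdGaussian N).map (fun a => ⟪a, x⟫)) :=
    (measurable_sgn.mul measurable_id).aestronglyMeasurable
  have h := integral_map hφ hf
  rw [stdGaussian_map_inner x hx] at h
  rw [← h]
  simp_rw [sgn_mul_self]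
  exact integral_abs_gauss

lemma integrable_abs_inner {N : ℕ} (u : EuclideanSpace ℝ (Fin N)) (hu : ‖u‖ = 1) :
    Integrable (fun a => |⟪a, u⟫|) (stdGaussian N) := by
  have hφ : AEMeasurable (fun a : EuclideanSpace ℝ (Fin N) => ⟪a, u⟫) (stdGaussian N) :=
    (continuous_inner_right u).measurable.aemeasurable
  have hf : AEStronglyMeasurable (fun t : ℝ => |t|)
      ((stdGaussian N).map (fun a => ⟪a, u⟫)) :=
    measurable_id.abs.aestronglyMeasurable
  have h := integrable_abs_gauss
  rw [← stdGaussian_map_inner u hu] at h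
  exact (integrable_map_measure hf hφ).1 h

lemma integrable_sgn_mul_inner {N : ℕ} (x w : EuclideanSpace ℝ (Fin N)) (hx : ‖x‖ = 1) :
    Integrable (fun a => sgn ⟪a, x⟫ * ⟪a, w⟫) (stdGaussian N) := by
  have hmeas : AEStronglyMeasurable (fun a => sgn ⟪a, x⟫ * ⟪a, w⟫) (stdGaussian N) :=
    ((measurable_sgn.comp (continuous_inner_right x).measurable).mul
      (continuous_inner_right w).measurable).aestronglyMeasurable
  by_cases hw : w = 0
  · subst hw
    simp only [inner_zero_right, mul_zero]
    exact integrable_zero _ _ _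
  · set u := ‖w‖⁻¹ • w with hu_def
    have hnw : ‖w‖ ≠ 0 := fun h => hw (norm_eq_zero.1 h)
    have hu : ‖u‖ = 1 := by
      rw [hu_def, norm_smul, norm_inv, norm_norm, inv_mul_cancel₀ hnw]
    have hwu : ∀ a : EuclideanSpace ℝ (Fin N), ⟪a, w⟫ = ‖w‖ * ⟪a, u⟫ := by
      intro a
      rw [hu_def, real_inner_smul_right, ← mul_assoc, mul_inv_cancel₀ hnw, one_mul]
    refine Integrable.mono' (((integrable_abs_inner u hu).const_mul ‖w‖)) hmeas ?_
    refine ae_of_all _ fun a => ?_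
    rw [Real.norm_eq_abs, abs_mul, abs_sgn, one_mul, hwu a, abs_mul, abs_of_nonneg (norm_nonneg w)]

lemma integral_sgn_mul_inner_orth {N : ℕ} (x z : EuclideanSpace ℝ (Fin N)) (hx : ‖x‖ = 1)
    (hxz : ⟪x, z⟫ = 0) :
    ∫ a, sgn ⟪a, x⟫ * ⟪a, z⟫ ∂(stdGaussian N) = 0 := by
  by_cases hz : z = 0
  · subst hz
    simp
  · set u := ‖z‖⁻¹ • z with hu_def
    have hnz : ‖z‖ ≠ 0 := fun h => hz (norm_eq_zero.1 h)
    have hu : ‖u‖ = 1 := by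
      rw [hu_def, norm_smul, norm_inv, norm_norm, inv_mul_cancel₀ hnz]
    have hxu : ⟪x, u⟫ = 0 := by
      rw [hu_def, real_inner_smul_right, hxz, mul_zero]
    have hzu : ∀ a : EuclideanSpace ℝ (Fin N), ⟪a, z⟫ = ‖z‖ * ⟪a, u⟫ := by
      intro a
      rw [hu_def, real_inner_smul_right, ← mul_assoc, mul_inv_cancel₀ hnz, one_mul]
    -- N ≥ 2
    have horth2 : Orthonormal ℝ ![x, u] := by
      constructor
      · intro i
        fin_cases i
        · simpa using hx
        · simpa using hu
      · intro i j hij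
        fin_cases i <;> fin_cases j
        · exact absurd rfl hij
        · simpa using hxu
        · simpa [real_inner_comm x u] using hxu
        · exact absurd rfl hij
    have hN2 : 2 ≤ N := by
      have := horth2.linearIndependent.fintype_card_le_finrank
      simpa [finrank_euclideanSpace_fin] using this
    set i0 : Fin N := ⟨0, by omega⟩
    set i1 : Fin N := ⟨1, by omega⟩
    have h01 : i0 ≠ i1 := by simp [i0, i1, Fin.ext_iff]
    -- orthonormal basis with b i0 = x, b i1 = u
    have hcard : Module.finrank ℝ (EuclideanSpace ℝ (Fin N)) = Fintype.card (Fin N) := by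
      rw [finrank_euclideanSpace_fin, Fintype.card_fin]
    have horth : Orthonormal ℝ (Set.restrict {i0, i1} fun i => if i = i0 then x else u) := by
      constructor
      · rintro ⟨i, hi⟩
        rcases hi with h | h
        · simp only [Set.restrict_apply, h, if_pos rfl]; exact hx
        · have : i = i1 := h
          simp only [Set.restrict_apply, this, if_neg (Ne.symm h01)]
          exact hu
      · rintro ⟨i, hi⟩ ⟨j, hj⟩ hij
        have hij' : i ≠ j := fun h => hij (Subtype.ext h)
        rcases hi with h | h <;> rcases hj with h' | h'
        · exact absurd (h.trans h'.symm) hij'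
        · have hj1 : j = i1 := h'
          simp only [Set.restrict_apply, h, hj1, if_pos rfl, if_neg (Ne.symm h01)]
          exact hxu
        · have hi1 : i = i1 := h
          simp only [Set.restrict_apply, hi1, h', if_pos rfl, if_neg (Ne.symm h01)]
          rw [real_inner_comm]
          exact hxu
        · exact absurd ((h : i = i1).trans (h' : j = i1).symm) hij'
    obtain ⟨b, hb⟩ := horth.exists_orthonormalBasis_extension_of_card_eq hcard
    have hb0 : b i0 = x := by
      have := hb i0 (by simp)
      simpa using this
    have hb1 : b i1 = u := by
      have := hb i1 (by simp)
      simpa [Ne.symm h01, h01] using this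
    -- step 1: change variables
    have step1 : ∫ a, sgn ⟪a, x⟫ * ⟪a, u⟫ ∂(stdGaussian N)
        = ∫ w, sgn (w i0) * (w i1) ∂(stdGaussian N) := by
      rw [← integral_comp_isometry b.repr (fun w => sgn (w i0) * (w i1))]
      congr 1
      funext a
      have h0 : ⟪a, x⟫ = (b.repr a) i0 := by
        rw [b.repr_apply_apply, hb0, real_inner_comm]
      have h1 : ⟪a, u⟫ = (b.repr a) i1 := by
        rw [b.repr_apply_apply, hb1, real_inner_comm]
      rw [← h0, ← h1]
    -- step 2: reflection
    have step2 : ∫ w, sgn (w i0) * (w i1) ∂(stdGaussian N) = 0 := by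
      set Lneg : EuclideanSpace ℝ (Fin N) ≃ₗᵢ[ℝ] EuclideanSpace ℝ (Fin N) :=
        LinearIsometryEquiv.piLpCongrRight 2
          (fun i => if i = i1 then LinearIsometryEquiv.neg ℝ else LinearIsometryEquiv.refl ℝ ℝ)
        with hLneg
      have happ : ∀ (w : EuclideanSpace ℝ (Fin N)) (i : Fin N),
          Lneg w i = if i = i1 then -(w i) else w i := by
        intro w i
        by_cases h : i = i1
        · subst h
          simp [hLneg, LinearIsometryEquiv.piLpCongrRight_apply]
        · simp [hLneg, LinearIsometryEquiv.piLpCongrRight_apply, h]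
      have h := integral_comp_isometry Lneg (fun w => sgn (w i0) * (w i1))
      have : (fun w : EuclideanSpace ℝ (Fin N) => sgn ((Lneg w) i0) * ((Lneg w) i1))
          = fun w => -(sgn (w i0) * (w i1)) := by
        funext w
        rw [happ w i0, happ w i1, if_neg h01, if_pos rfl, mul_neg]
      rw [show (fun w : EuclideanSpace ℝ (Fin N) => sgn (Lneg w i0) * Lneg w i1)
        = fun w => -(sgn (w i0) * (w i1)) from this] at h
      rw [integral_neg] at h
      linarith [h]
    calc ∫ a, sgn ⟪a, x⟫ * ⟪a, z⟫ ∂(stdGaussian N)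
        = ∫ a, ‖z‖ * (sgn ⟪a, x⟫ * ⟪a, u⟫) ∂(stdGaussian N) := by
          congr 1; funext a; rw [hzu a]; ring
      _ = ‖z‖ * ∫ a, sgn ⟪a, x⟫ * ⟪a, u⟫ ∂(stdGaussian N) := integral_const_mul _ _
      _ = 0 := by rw [step1, step2, mul_zero]

lemma sqrt_arith : Real.sqrt (π / 2) * ((Real.sqrt (2 * π))⁻¹ * 2) = 1 := by
  have hπ : (0:ℝ) < π := Real.pi_pos
  have h1 : Real.sqrt (2 * π) = Real.sqrt 2 * Real.sqrt π :=
    Real.sqrt_mul (by norm_num) π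
  have h2 : Real.sqrt (π / 2) = Real.sqrt π / Real.sqrt 2 :=
    Real.sqrt_div hπ.le 2
  have s2 : Real.sqrt 2 ≠ 0 := by positivity
  have sπ : Real.sqrt π ≠ 0 := by positivity
  rw [h1, h2]
  field_simp
  rw [Real.sq_sqrt (by norm_num : (0:ℝ) ≤ 2)]

theorem stmt6 {N : ℕ} (x y : EuclideanSpace ℝ (Fin N)) (hx : ‖x‖ = 1) (hy : ‖y‖ = 1) :
    Real.sqrt (Real.pi / 2) * ∫ a, sgn ⟪a, x⟫ * ⟪a, y⟫ ∂(stdGaussian N) = ⟪x, y⟫ := by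
  set c : ℝ := ⟪x, y⟫ with hc
  set z : EuclideanSpace ℝ (Fin N) := y - c • x with hz
  have hxz : ⟪x, z⟫ = 0 := by
    rw [hz, inner_sub_right, real_inner_smul_right, real_inner_self_eq_norm_mul_norm, hx]
    ring
  have hdecomp : ∀ a : EuclideanSpace ℝ (Fin N), ⟪a, y⟫ = c * ⟪a, x⟫ + ⟪a, z⟫ := by
    intro a
    rw [hz, inner_sub_right, real_inner_smul_right]
    ring
  have hsplit : ∫ a, sgn ⟪a, x⟫ * ⟪a, y⟫ ∂(stdGaussian N)
      = c * ∫ a, sgn ⟪a, x⟫ * ⟪a, x⟫ ∂(stdGaussian N)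
        + ∫ a, sgn ⟪a, x⟫ * ⟪a, z⟫ ∂(stdGaussian N) := by
    rw [← integral_const_mul, ← integral_add
      ((integrable_sgn_mul_inner x x hx).const_mul c) (integrable_sgn_mul_inner x z hx)]
    congr 1
    funext a
    rw [hdecomp a]
    ring
  rw [hsplit, integral_sgn_mul_inner_self x hx, integral_sgn_mul_inner_orth x z hx hxz, add_zero]
  calc Real.sqrt (π / 2) * (c * ((Real.sqrt (2 * π))⁻¹ * 2))
      = c * (Real.sqrt (π / 2) * ((Real.sqrt (2 * π))⁻¹ * 2)) := by ring
    _ = c := by rw [sqrt_arith, mul_one]
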